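/- If Q has an optimal solution P with cost C and makespan n satisfying the make-progress rule, then for any k ≤ n, the combination of the prefix of P of length k together with the delete-free relaxation of the remaining suffix of P forms a valid Variant-II solution at makespan k with total cost at most C. -/

import Mathlib

structure Strips (F A : Type) where
  init : Set F
  goal : Set F
  pre : A → Set F
  add : A → Set F
  del : A → Set F
  cost : A → ℕ

def Strips.step {F A : Type} (Q : Strips F A) (s : Set F) (a : A) : Set F :=
  (s \ Q.del a) ∪ Q.add a

def Strips.run {F A : Type} (Q : Strips F A) (s : Set F) (p : List A) : Set F :=
  p.foldl Q.step s

def Strips.ValidFrom {F A : Type} (Q : Strips F A) : Set F → List A → Prop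
  | _, [] => True
  | s, a :: p => Q.pre a ⊆ s ∧ Q.ValidFrom (Q.step s a) p

def Strips.Solves {F A : Type} (Q : Strips F A) (p : List A) : Prop :=
  Q.ValidFrom Q.init p ∧ Q.goal ⊆ Q.run Q.init p

def Strips.planCost {F A : Type} (Q : Strips F A) (p : List A) : ℕ :=
  (p.map Q.cost).sum

/-- The layered make-progress rule: in the induced state sequence, no state at a
later index is a subset of a state at an earlier index. -/
def Strips.MakesProgress {F A : Type} (Q : Strips F A) (s : Set F) (p : List A) : Prop :=
  ∀ i j : ℕ, i < j → j ≤ p.length → ¬ Q.run s (p.take j) ⊆ Q.run s (p.take i)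

/-- The delete-free relaxation: all delete-effects removed. -/
def Strips.relax {F A : Type} (Q : Strips F A) : Strips F A :=
  { Q with del := fun _ => ∅ }

/-- The distinct actions of a list, in order of first occurrence. -/
def firstDedup {A : Type} [DecidableEq A] : List A → List A
  | [] => []
  | a :: l => a :: firstDedup (l.filter (· ≠ a))
termination_by l => l.length
decreasing_by
  simp only [List.length_cons]
  first
    | exact Nat.lt_succ_of_le (List.length_filter_le _ _)
    | (rw [List.length_unattach]; exact Nat.lt_succ_of_le ((List.length_filter_le _ _).trans (le_of_eq List.length_attach)))
    | (simp only [List.length_unattach, List.length_attach]; exact Nat.lt_succ_of_le (List.length_filter_le _ _))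


section Aux

set_option linter.unusedSectionVars false

variable {F A : Type} [DecidableEq A] (Q : Strips F A)

lemma relax_step (s : Set F) (a : A) : Q.relax.step s a = s ∪ Q.add a := by
  simp [Strips.relax, Strips.step]

lemma relax_run_mono : ∀ (p : List A) (s t : Set F), s ⊆ t →
    Q.relax.run s p ⊆ Q.relax.run t p := by
  intro p
  induction p with
  | nil => intro s t h; exact h
  | cons a p ih =>
    intro s t h
    simp only [Strips.run, List.foldl_cons] at *
    exact ih _ _ (by rw [relax_step, relax_step]; exact Set.union_subset_union_left _ h)

lemma run_subset_relax_run : ∀ (p : List A) (s : Set F),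
    Q.run s p ⊆ Q.relax.run s p := by
  intro p
  induction p with
  | nil => intro s; exact subset_rfl
  | cons a p ih =>
    intro s
    simp only [Strips.run, List.foldl_cons] at *
    exact subset_trans (ih _) (relax_run_mono Q p _ _
      (by rw [relax_step]; exact Set.union_subset_union_left _ Set.diff_subset))

lemma valid_relax : ∀ (p : List A) (s t : Set F), s ⊆ t → Q.ValidFrom s p →
    Q.relax.ValidFrom t p := by
  intro p
  induction p with
  | nil => intro s t _ _; trivial
  | cons a p ih =>
    intro s t hst ⟨h1, h2⟩
    refine ⟨subset_trans h1 hst, ih _ _ ?_ h2⟩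
    rw [relax_step]
    exact Set.union_subset_union_left _ (subset_trans Set.diff_subset hst)

lemma relax_valid_filter (a : A) : ∀ (p : List A) (s t : Set F), s ⊆ t →
    Q.add a ⊆ t → Q.relax.ValidFrom s p →
    Q.relax.ValidFrom t (p.filter (· ≠ a)) := by
  intro p
  induction p with
  | nil => intro s t _ _ _; trivial
  | cons b p ih =>
    intro s t hst ha ⟨h1, h2⟩
    by_cases hba : b = a
    · subst hba
      simp only [List.filter_cons, ne_eq, not_true_eq_false, decide_false, if_false]
      exact ih _ _ (by rw [relax_step]; exact Set.union_subset hst ha) ha h2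
    · simp only [List.filter_cons, ne_eq, hba, not_false_eq_true, decide_true, if_true]
      refine ⟨subset_trans h1 hst, ih _ _ ?_ ?_ h2⟩
      · rw [relax_step, relax_step]; exact Set.union_subset_union_left _ hst
      · rw [relax_step]; exact subset_trans ha Set.subset_union_left

lemma relax_valid_firstDedup : ∀ (p : List A) (s : Set F),
    Q.relax.ValidFrom s p → Q.relax.ValidFrom s (firstDedup p) := by
  intro p
  induction p using firstDedup.induct with
  | case1 => intro s h; rw [firstDedup]; trivial
  | case2 a l ih =>
    simp only [List.unattach_filter (f := fun x : {x // x ∈ l} => decide (x.1 ≠ a)) (g := fun x => decide (x ≠ a)) (hf := fun _ _ => rfl), List.unattach_attach] at ih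
    intro s ⟨h1, h2⟩
    rw [firstDedup]
    refine ⟨h1, ih _ ?_⟩
    exact relax_valid_filter Q a l _ _ subset_rfl
      (by rw [relax_step]; exact Set.subset_union_right) h2

lemma relax_run_eq : ∀ (p : List A) (s : Set F),
    Q.relax.run s p = s ∪ ⋃ a ∈ p, Q.add a := by
  intro p
  induction p with
  | nil => intro s; simp [Strips.run]
  | cons a p ih =>
    intro s
    simp only [Strips.run, List.foldl_cons] at *
    rw [ih, relax_step]
    ext x
    simp only [Set.mem_union, Set.mem_iUnion, List.mem_cons, exists_prop]
    constructor
    · rintro ((h | h) | ⟨b, hb, h⟩)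
      · exact Or.inl h
      · exact Or.inr ⟨a, Or.inl rfl, h⟩
      · exact Or.inr ⟨b, Or.inr hb, h⟩
    · rintro (h | ⟨b, (rfl | hb), h⟩)
      · exact Or.inl (Or.inl h)
      · exact Or.inl (Or.inr h)
      · exact Or.inr ⟨b, hb, h⟩

lemma mem_firstDedup : ∀ (p : List A) (a : A), a ∈ firstDedup p ↔ a ∈ p := by
  intro p
  induction p using firstDedup.induct with
  | case1 => intro a; simp [firstDedup]
  | case2 b l ih =>
    simp only [List.unattach_filter (f := fun x : {x // x ∈ l} => decide (x.1 ≠ b)) (g := fun x => decide (x ≠ b)) (hf := fun _ _ => rfl), List.unattach_attach] at ih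
    intro a
    rw [firstDedup]
    simp only [List.mem_cons, ih, List.mem_filter, ne_eq, decide_eq_true_eq]
    by_cases hab : a = b <;> tauto

lemma firstDedup_sublist : ∀ (p : List A), (firstDedup p).Sublist p := by
  intro p
  induction p using firstDedup.induct with
  | case1 => simp [firstDedup]
  | case2 a l ih =>
    simp only [List.unattach_filter (f := fun x : {x // x ∈ l} => decide (x.1 ≠ a)) (g := fun x => decide (x ≠ a)) (hf := fun _ _ => rfl), List.unattach_attach] at ih
    rw [firstDedup]
    exact (ih.trans (List.filter_sublist (l := l))).cons_cons a

lemma valid_take : ∀ (p : List A) (k : ℕ) (s : Set F),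
    Q.ValidFrom s p → Q.ValidFrom s (p.take k) := by
  intro p
  induction p with
  | nil => intro k s _; rw [List.take_nil]; trivial
  | cons a p ih =>
    intro k s h
    cases k with
    | zero => trivial
    | succ k => exact ⟨h.1, ih k _ h.2⟩

lemma run_append (p q : List A) (s : Set F) :
    Q.run s (p ++ q) = Q.run (Q.run s p) q := by
  simp [Strips.run, List.foldl_append]

lemma valid_append : ∀ (p q : List A) (s : Set F),
    Q.ValidFrom s (p ++ q) → Q.ValidFrom (Q.run s p) q := by
  intro p
  induction p with
  | nil => intro q s h; exact h
  | cons a p ih => intro q s h; exact ih q _ h.2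

lemma sublist_planCost {p q : List A} (h : p.Sublist q) :
    Q.planCost p ≤ Q.planCost q :=
  List.Sublist.sum_le_sum (h.map Q.cost) (fun _ _ => Nat.zero_le _)

end Aux


/-- Variant-II soundness: if `Q` has an optimal solution `P` with cost `C` and
makespan `n` satisfying the make-progress rule, then for any `k ≤ n`, the prefix of
`P` of length `k` (valid and making progress) together with the delete-free
relaxation of the remaining suffix of `P` (its distinct actions solve the relaxation
from the intermediate state) forms a valid Variant-II solution at makespan `k` with
total cost at most `C`. -/
theorem variantII_soundness {F A : Type} [DecidableEq A] (Q : Strips F A)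
    (P : List A) (hP : Q.Solves P) (hprog : Q.MakesProgress Q.init P)
    (hopt : ∀ P' : List A, Q.Solves P' → Q.planCost P ≤ Q.planCost P')
    (k : ℕ) (hk : k ≤ P.length) :
    Q.ValidFrom Q.init (P.take k) ∧
    Q.MakesProgress Q.init (P.take k) ∧
    Q.relax.ValidFrom (Q.run Q.init (P.take k)) (firstDedup (P.drop k)) ∧
    Q.goal ⊆ Q.relax.run (Q.run Q.init (P.take k)) (firstDedup (P.drop k)) ∧
    Q.planCost (P.take k) + Q.relax.planCost (firstDedup (P.drop k)) ≤
      Q.planCost P := by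
  obtain ⟨hvalid, hgoal⟩ := hP
  have hsplit : P = P.take k ++ P.drop k := (List.take_append_drop k P).symm
  have hvdrop : Q.ValidFrom (Q.run Q.init (P.take k)) (P.drop k) :=
    valid_append Q _ _ _ (by rw [← hsplit]; exact hvalid)
  refine ⟨valid_take Q P k Q.init hvalid, ?_, ?_, ?_, ?_⟩
  · intro i j hij hj hsub
    have hjk : j ≤ k := by
      have := hj.trans (List.length_take (i := k) (l := P)).le
      omega
    refine hprog i j hij (hjk.trans hk) ?_
    rw [List.take_take, List.take_take, min_eq_left hjk,
      min_eq_left ((le_of_lt hij).trans hjk)] at hsub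
    exact hsub
  · exact relax_valid_firstDedup Q _ _ (valid_relax Q _ _ _ subset_rfl hvdrop)
  · have h1 : Q.goal ⊆ Q.run (Q.run Q.init (P.take k)) (P.drop k) := by
      rw [← run_append, ← hsplit]; exact hgoal
    have h2 := h1.trans (run_subset_relax_run Q (P.drop k) _)
    rw [relax_run_eq] at h2 ⊢
    refine h2.trans ?_
    apply Set.union_subset_union_right
    intro x hx
    simp only [Set.mem_iUnion, exists_prop] at hx ⊢
    obtain ⟨a, ha, hxa⟩ := hx
    exact ⟨a, (mem_firstDedup (P.drop k) a).mpr ha, hxa⟩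
  · have hcost : Q.planCost P = Q.planCost (P.take k) + Q.planCost (P.drop k) := by
      conv_lhs => rw [hsplit]
      simp [Strips.planCost]
    have hrel : Q.relax.planCost (firstDedup (P.drop k)) ≤ Q.planCost (P.drop k) := by
      have : Q.relax.planCost = Q.planCost := rfl
      rw [this]
      exact sublist_planCost Q (firstDedup_sublist (P.drop k))
    omega
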